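/- Let P be a real symmetric positive definite n×n matrix, Ω a real symmetric n×n matrix, λ ∈ (0,1), N = λ·I + Ω P Ω, P' = (1/λ)·(P − P Ω N⁻¹ Ω P), and for θ̃ ∈ ℝⁿ let θ̃' = (I − P Ω N⁻¹ Ω)·θ̃. Then the Lyapunov function V = θ̃ᵀ P⁻¹ θ̃ satisfies the one-step decrease θ̃'ᵀ (P')⁻¹ θ̃' ≤ λ · θ̃ᵀ P⁻¹ θ̃. -/

import Mathlib

open Matrix

/-- One-step decrease of the Lyapunov function `V = θ̃ᵀ P⁻¹ θ̃` along the proposed RLS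
update: with `N = λ I + Ω P Ω`, `P' = (1/λ)(P − P Ω N⁻¹ Ω P)` and
`θ̃' = (I − P Ω N⁻¹ Ω) θ̃`, one has `θ̃'ᵀ (P')⁻¹ θ̃' ≤ λ θ̃ᵀ P⁻¹ θ̃`. -/
theorem lyapunov_decrease {n : ℕ} (P Ω : Matrix (Fin n) (Fin n) ℝ)
    (hP : P.PosDef) (hΩ : Ω.IsHermitian) (lam : ℝ) (hlam0 : 0 < lam) (hlam1 : lam < 1)
    (N P' : Matrix (Fin n) (Fin n) ℝ)
    (hN : N = lam • (1 : Matrix (Fin n) (Fin n) ℝ) + Ω * P * Ω)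
    (hP' : P' = lam⁻¹ • (P - P * Ω * N⁻¹ * Ω * P))
    (θtil θtil' : Fin n → ℝ)
    (hθ : θtil' = ((1 : Matrix (Fin n) (Fin n) ℝ) - P * Ω * N⁻¹ * Ω) *ᵥ θtil) :
    θtil' ⬝ᵥ (P'⁻¹ *ᵥ θtil') ≤ lam * (θtil ⬝ᵥ (P⁻¹ *ᵥ θtil)) := by
  have hΩt : Ωᵀ = Ω := by simpa using hΩ.eq
  have hPt : Pᵀ = P := by simpa using hP.isHermitian.eq
  -- N is positive definite
  have hNpd : N.PosDef := by
    rw [hN]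
    refine Matrix.PosDef.add_posSemidef ?_ ?_
    · rw [Matrix.smul_one_eq_diagonal]
      exact Matrix.PosDef.diagonal fun _ => hlam0
    · simpa [hΩt] using hP.posSemidef.conjTranspose_mul_mul_same Ω
  have hNdet : IsUnit N.det := (Matrix.isUnit_iff_isUnit_det N).mp hNpd.isUnit
  have hPdet : IsUnit P.det := (Matrix.isUnit_iff_isUnit_det P).mp hP.isUnit
  have hPPi : P * P⁻¹ = 1 := Matrix.mul_nonsing_inv P hPdet
  have hPiP : P⁻¹ * P = 1 := Matrix.nonsing_inv_mul P hPdet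
  have hNiN : N⁻¹ * N = 1 := Matrix.nonsing_inv_mul N hNdet
  have hNNi : N * N⁻¹ = 1 := Matrix.mul_nonsing_inv N hNdet
  set S : Matrix (Fin n) (Fin n) ℝ := lam • P⁻¹ + Ω * Ω with hS
  -- key factorization 1
  have hfact1 : lam • (P * Ω * N⁻¹ * Ω) + P * Ω * N⁻¹ * (Ω * P * Ω * Ω) = P * Ω * Ω := by
    have h1 : lam • Ω + Ω * P * Ω * Ω = N * Ω := by
      rw [hN, Matrix.add_mul, Matrix.smul_mul, Matrix.one_mul]
    calc lam • (P * Ω * N⁻¹ * Ω) + P * Ω * N⁻¹ * (Ω * P * Ω * Ω)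
        = P * Ω * N⁻¹ * (lam • Ω + Ω * P * Ω * Ω) := by
          rw [Matrix.mul_add, Matrix.mul_smul]
      _ = P * Ω * N⁻¹ * (N * Ω) := by rw [h1]
      _ = P * Ω * (N⁻¹ * N) * Ω := by simp only [Matrix.mul_assoc]
      _ = P * Ω * Ω := by rw [hNiN, Matrix.mul_one]
  -- key identity 1 : P' * S = 1
  have key1 : P' * S = 1 := by
    have e2 : P * Ω * N⁻¹ * Ω * P * P⁻¹ = P * Ω * N⁻¹ * Ω := by
      rw [Matrix.mul_assoc, hPPi, Matrix.mul_one]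
    have e3 : P * Ω * N⁻¹ * Ω * P * (Ω * Ω) = P * Ω * N⁻¹ * (Ω * P * Ω * Ω) := by
      simp only [Matrix.mul_assoc]
    have expand : (P - P * Ω * N⁻¹ * Ω * P) * S = lam • 1 := by
      rw [hS, Matrix.sub_mul, Matrix.mul_add, Matrix.mul_add, Matrix.mul_smul,
        Matrix.mul_smul, hPPi, e2, e3]
      have : P * (Ω * Ω) = P * Ω * Ω := by rw [Matrix.mul_assoc]
      rw [this, ← hfact1]
      abel
    rw [hP', Matrix.smul_mul, expand, smul_smul, inv_mul_cancel₀ hlam0.ne', one_smul]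
  have hP'inv : P'⁻¹ = S := Matrix.inv_eq_right_inv key1
  -- key identity 2 : S * (1 - P Ω N⁻¹ Ω) = lam • P⁻¹
  have key2 : S * ((1 : Matrix (Fin n) (Fin n) ℝ) - P * Ω * N⁻¹ * Ω) = lam • P⁻¹ := by
    have h1 : lam • Ω + Ω * (Ω * P * Ω) = Ω * N := by
      rw [hN, Matrix.mul_add, Matrix.mul_smul, Matrix.mul_one, Matrix.mul_assoc]
    have e1 : P⁻¹ * (P * Ω * N⁻¹ * Ω) = Ω * N⁻¹ * Ω := by
      calc P⁻¹ * (P * Ω * N⁻¹ * Ω) = (P⁻¹ * P) * Ω * N⁻¹ * Ω := by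
            simp only [Matrix.mul_assoc]
        _ = Ω * N⁻¹ * Ω := by rw [hPiP, Matrix.one_mul]
    have e2 : Ω * Ω * (P * Ω * N⁻¹ * Ω) = Ω * (Ω * P * Ω) * (N⁻¹ * Ω) := by
      simp only [Matrix.mul_assoc]
    have hsub : lam • (Ω * N⁻¹ * Ω) + Ω * (Ω * P * Ω) * (N⁻¹ * Ω) = Ω * Ω := by
      calc lam • (Ω * N⁻¹ * Ω) + Ω * (Ω * P * Ω) * (N⁻¹ * Ω)
          = (lam • Ω + Ω * (Ω * P * Ω)) * (N⁻¹ * Ω) := by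
            rw [Matrix.add_mul, Matrix.smul_mul, Matrix.mul_assoc]
        _ = Ω * N * (N⁻¹ * Ω) := by rw [h1]
        _ = Ω * (N * N⁻¹) * Ω := by simp only [Matrix.mul_assoc]
        _ = Ω * Ω := by rw [hNNi, Matrix.mul_one]
    rw [hS, Matrix.add_mul, Matrix.mul_sub, Matrix.mul_sub, Matrix.mul_one, Matrix.mul_one,
      Matrix.smul_mul, e1, e2, ← hsub]
    abel
  -- vector-level consequence
  have hvec : P'⁻¹ *ᵥ θtil' = lam • (P⁻¹ *ᵥ θtil) := by
    rw [hP'inv, hθ, Matrix.mulVec_mulVec, key2, Matrix.smul_mulVec]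
  -- the cross term is nonnegative
  set u : Fin n → ℝ := Ω *ᵥ θtil with hu
  have hNit : N⁻¹ᵀ = N⁻¹ := by simpa using hNpd.inv.isHermitian.eq
  have hT : (P * Ω * N⁻¹ * Ω)ᵀ * P⁻¹ = Ω * N⁻¹ * Ω := by
    simp [Matrix.transpose_mul, hΩt, hPt, hNit, Matrix.mul_assoc, hPPi]
  have hq : ((P * Ω * N⁻¹ * Ω) *ᵥ θtil) ⬝ᵥ (P⁻¹ *ᵥ θtil) = u ⬝ᵥ (N⁻¹ *ᵥ u) := by
    rw [dotProduct_comm, Matrix.dotProduct_mulVec, ← Matrix.mulVec_transpose,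
      Matrix.mulVec_mulVec, hT, dotProduct_comm]
    have h2 : (Ω * N⁻¹ * Ω) *ᵥ θtil = Ω *ᵥ (N⁻¹ *ᵥ u) := by
      simp [hu, ← Matrix.mulVec_mulVec]
    rw [h2, Matrix.dotProduct_mulVec, ← hΩt, Matrix.vecMul_transpose, ← hu]
  have hq0 : 0 ≤ u ⬝ᵥ (N⁻¹ *ᵥ u) := by
    have := hNpd.inv.posSemidef.dotProduct_mulVec_nonneg u
    simpa using this
  -- finish
  rw [hvec, dotProduct_smul, hθ, Matrix.sub_mulVec, Matrix.one_mulVec,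
    sub_dotProduct, hq]
  have h := mul_le_mul_of_nonneg_left (sub_le_self (θtil ⬝ᵥ (P⁻¹ *ᵥ θtil)) hq0) hlam0.le
  simpa [smul_eq_mul, mul_sub] using h
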